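/- Let γ > 0 and T* > 0, let h ∈ L^{2,γ}, and let H : [0,T*] × [0,∞) → ℝ be jointly measurable with sup_{(t,x) ∈ [0,T*] × [0,∞)} |H(t,x)| < ∞ and such that for each x ≥ 0 the function t ↦ H(t,x) is càdlàg (right-continuous with left limits). Then the map h̃ : [0,T*] → L^{2,γ} defined by h̃(t) := ( x ↦ h(t+x) H(t,x) ) takes values in L^{2,γ} and is càdlàg in L^{2,γ}: it is right-continuous in the L^{2,γ}-norm at every t ∈ [0,T*), and has a left limit in the L^{2,γ}-norm at every t ∈ (0,T*]. -/

import Mathlib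

open MeasureTheory Filter Set Topology
open scoped RealInnerProductSpace


noncomputable def phi (γ : ℝ) (h : ℝ → ℝ) : ℝ → ℝ :=
  (Set.Ioi (0:ℝ)).indicator (fun y => h y * Real.exp (γ * y / 2))

theorem phi_sq (y : ℝ) :
    phi γ h y ^ 2 = (Set.Ioi (0:ℝ)).indicator (fun y => h y ^ 2 * Real.exp (γ * y)) y := by
  by_cases hy : y ∈ Set.Ioi (0:ℝ)
  · simp only [phi, Set.indicator_of_mem hy, mul_pow]
    congr 1
    rw [← Real.exp_nat_mul]
    norm_num
    ring_nf
  · simp [phi, Set.indicator_of_notMem hy]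

theorem phi_meas (hmeas : Measurable h) : Measurable (phi γ h) :=
  (hmeas.mul (Real.measurable_exp.comp (by fun_prop))).indicator measurableSet_Ioi

theorem phi_int (hmeas : Measurable h)
    (hL2 : IntegrableOn (fun x => h x ^ 2 * Real.exp (γ * x)) (Set.Ioi 0)) :
    Integrable (fun y => phi γ h y ^ 2) := by
  have : (fun y => phi γ h y ^ 2)
      = (Set.Ioi (0:ℝ)).indicator (fun y => h y ^ 2 * Real.exp (γ * y)) := funext phi_sq
  rw [this, integrable_indicator_iff measurableSet_Ioi]
  exact hL2

theorem phi_memLp (hmeas : Measurable h)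
    (hL2 : IntegrableOn (fun x => h x ^ 2 * Real.exp (γ * x)) (Set.Ioi 0)) :
    MemLp (phi γ h) 2 (volume : Measure ℝ) :=
  (memLp_two_iff_integrable_sq (phi_meas hmeas).aestronglyMeasurable).2 (phi_int hmeas hL2)

theorem shift_int (hmeas : Measurable h)
    (hL2 : IntegrableOn (fun x => h x ^ 2 * Real.exp (γ * x)) (Set.Ioi 0))
    {t : ℝ} (ht : 0 ≤ t) :
    IntegrableOn (fun x => h (t + x) ^ 2 * Real.exp (γ * x)) (Set.Ioi 0) := by
  have hint : Integrable (fun x => Real.exp (-(γ * t)) * phi γ h (x + t) ^ 2) :=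
    ((phi_int hmeas hL2).comp_add_right t).const_mul _
  refine (hint.integrableOn).congr_fun ?_ measurableSet_Ioi
  intro x hx
  have hxt : x + t ∈ Set.Ioi (0:ℝ) := by simp only [Set.mem_Ioi] at *; linarith
  simp only [phi, Set.indicator_of_mem hxt]
  rw [mul_pow, ← Real.exp_nat_mul, add_comm t x,
    show ((2:ℕ):ℝ) * (γ * (x + t) / 2) = γ * x + γ * t by push_cast; ring,
    Real.exp_add, Real.exp_neg]
  field_simp

noncomputable def trCM (s : ℝ) : C(ℝ, ℝ) := ⟨fun x => x + s, by continuity⟩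

noncomputable def uu (γ : ℝ) (f : Lp ℝ 2 (volume : Measure ℝ)) (s : ℝ) :
    Lp ℝ 2 (volume : Measure ℝ) :=
  Real.exp (-(γ * s) / 2) •
    Lp.compMeasurePreserving (fun x => x + s)
      (measurePreserving_add_right volume s) f

theorem uu_cont (γ : ℝ) (f : Lp ℝ 2 (volume : Measure ℝ)) : Continuous (uu γ f) := by
  unfold uu
  apply Continuous.fun_smul (by fun_prop)
  exact Continuous.compMeasurePreservingLp (f := fun _ : ℝ => f) (g := trCM)
    continuous_const
    (ContinuousMap.continuous_of_continuous_uncurry _ (by exact continuous_snd.add continuous_fst))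
    (fun s => measurePreserving_add_right volume s) (by norm_num)

theorem norm_sq_eq (f : Lp ℝ 2 (volume : Measure ℝ)) :
    ∫ x : ℝ, (f x) ^ 2 = ‖f‖ ^ 2 := by
  rw [← real_inner_self_eq_norm_sq f, L2.inner_def]
  congr 1
  ext x
  simp [RCLike.inner_apply, pow_two]

theorem uu_coe (γ : ℝ) (h : ℝ → ℝ) (hφ : MemLp h 2 (volume : Measure ℝ)) (s : ℝ) :
    uu γ (hφ.toLp h) s =ᵐ[volume] fun x => Real.exp (-(γ * s) / 2) * h (x + s) := by
  set hp := measurePreserving_add_right (volume : Measure ℝ) s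
  have e2 : (Lp.compMeasurePreserving (fun x => x + s) hp (hφ.toLp h) : ℝ → ℝ)
      =ᵐ[volume] h ∘ (fun x => x + s) := by
    rw [Lp.toLp_compMeasurePreserving hφ hp]
    exact (hφ.comp_measurePreserving hp).coeFn_toLp
  filter_upwards [Lp.coeFn_smul (Real.exp (-(γ * s) / 2))
      (Lp.compMeasurePreserving (fun x => x + s) hp (hφ.toLp h)), e2] with x h1 h2
  show (Real.exp (-(γ * s) / 2) •
      Lp.compMeasurePreserving (fun x => x + s) hp (hφ.toLp h) : Lp ℝ 2 (volume : Measure ℝ)) x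
      = _
  rw [h1]
  simp only [Pi.smul_apply, h2, smul_eq_mul]
  rfl

theorem core_tendsto (γ T : ℝ) (hγ : 0 < γ)
    (h : ℝ → ℝ) (hmeas : Measurable h)
    (hL2 : IntegrableOn (fun x => h x ^ 2 * Real.exp (γ * x)) (Set.Ioi 0))
    (H : ℝ → ℝ → ℝ) (hHmeas : Measurable (Function.uncurry H))
    (M : ℝ) (hM : ∀ t ∈ Set.Icc 0 T, ∀ x ∈ Set.Ici (0:ℝ), |H t x| ≤ M)
    (t : ℝ) (ht0 : 0 ≤ t) (htT : t ≤ T)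
    (S : Set ℝ) (hS : S ⊆ Set.Icc 0 T)
    (K : ℝ → ℝ)
    (hKm : AEStronglyMeasurable K (volume.restrict (Set.Ioi 0)))
    (hKb : ∀ x ∈ Set.Ioi (0:ℝ), |K x| ≤ M)
    (hK : ∀ x ∈ Set.Ioi (0:ℝ), Filter.Tendsto (fun s => H s x) (nhdsWithin t S) (nhds (K x))) :
    Filter.Tendsto (fun s => Real.sqrt (∫ x in Set.Ioi (0:ℝ),
        (h (s + x) * H s x - h (t + x) * K x) ^ 2 * Real.exp (γ * x)))
      (nhdsWithin t S) (nhds 0) := by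
  have hφ : MemLp (phi γ h) 2 (volume : Measure ℝ) := phi_memLp hmeas hL2
  set u : ℝ → Lp ℝ 2 (volume : Measure ℝ) := uu γ (hφ.toLp _) with hu_def
  have hmeas_sh : ∀ s : ℝ, Measurable fun x => h (s + x) := fun s =>
    hmeas.comp (measurable_const.add measurable_id)
  have hmeas_H : ∀ s : ℝ, Measurable fun x => H s x := fun s =>
    hHmeas.comp (measurable_const.prodMk measurable_id)
  have hexp : Measurable fun x : ℝ => Real.exp (γ * x) := by fun_prop
  set B : ℝ → ℝ := fun s => ∫ x in Set.Ioi (0:ℝ),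
      h (t + x) ^ 2 * (H s x - K x) ^ 2 * Real.exp (γ * x) with hB_def
  have hasmB : ∀ s : ℝ, AEStronglyMeasurable
      (fun x => h (t + x) ^ 2 * (H s x - K x) ^ 2 * Real.exp (γ * x))
      (volume.restrict (Set.Ioi 0)) := by
    intro s
    have h1 : AEStronglyMeasurable (fun x => H s x - K x) (volume.restrict (Set.Ioi 0)) :=
      (hmeas_H s).aestronglyMeasurable.sub hKm
    have h2 : AEStronglyMeasurable (fun x => (H s x - K x) ^ 2)
        (volume.restrict (Set.Ioi 0)) := by
      simpa [pow_two, Pi.mul_def] using h1.mul h1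
    exact (((hmeas_sh t).pow_const 2).aestronglyMeasurable.mul h2).mul hexp.aestronglyMeasurable
  have hBint : ∀ s ∈ S, IntegrableOn
      (fun x => h (t + x) ^ 2 * (H s x - K x) ^ 2 * Real.exp (γ * x)) (Set.Ioi 0) := by
    intro s hs
    refine Integrable.mono' ((shift_int hmeas hL2 ht0).const_mul ((2*M)^2)) (hasmB s) ?_
    refine (ae_restrict_iff' measurableSet_Ioi).2 (ae_of_all _ fun x hx => ?_)
    have hHb := abs_le.1 (hM s (hS hs) x (Set.mem_Ici.2 (le_of_lt hx)))
    have hKb' := abs_le.1 (hKb x hx)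
    have h2 : (H s x - K x) ^ 2 ≤ (2*M) ^ 2 := sq_le_sq' (by linarith) (by linarith)
    rw [Real.norm_eq_abs, abs_of_nonneg (by positivity)]
    calc h (t + x) ^ 2 * (H s x - K x) ^ 2 * Real.exp (γ * x)
        ≤ h (t + x) ^ 2 * (2*M) ^ 2 * Real.exp (γ * x) := by
          have := mul_le_mul_of_nonneg_left h2 (sq_nonneg (h (t + x)))
          exact mul_le_mul_of_nonneg_right this (Real.exp_nonneg _)
      _ = (2*M) ^ 2 * (h (t + x) ^ 2 * Real.exp (γ * x)) := by ring
  have hBtend : Tendsto B (nhdsWithin t S) (nhds 0) := by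
    have key : Tendsto B (nhdsWithin t S) (nhds (∫ x in Set.Ioi (0:ℝ), (0:ℝ))) := by
      refine tendsto_integral_filter_of_dominated_convergence
        (fun x => (2*M) ^ 2 * (h (t + x) ^ 2 * Real.exp (γ * x))) ?_ ?_ ?_ ?_
      · exact Eventually.of_forall hasmB
      · filter_upwards [self_mem_nhdsWithin] with s hs
        refine (ae_restrict_iff' measurableSet_Ioi).2 (ae_of_all _ fun x hx => ?_)
        have hHb := abs_le.1 (hM s (hS hs) x (Set.mem_Ici.2 (le_of_lt hx)))
        have hKb' := abs_le.1 (hKb x hx)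
        have h2 : (H s x - K x) ^ 2 ≤ (2*M) ^ 2 := sq_le_sq' (by linarith) (by linarith)
        rw [Real.norm_eq_abs, abs_of_nonneg (by positivity)]
        calc h (t + x) ^ 2 * (H s x - K x) ^ 2 * Real.exp (γ * x)
            ≤ h (t + x) ^ 2 * (2*M) ^ 2 * Real.exp (γ * x) := by
              have := mul_le_mul_of_nonneg_left h2 (sq_nonneg (h (t + x)))
              exact mul_le_mul_of_nonneg_right this (Real.exp_nonneg _)
          _ = (2*M) ^ 2 * (h (t + x) ^ 2 * Real.exp (γ * x)) := by ring
      · exact (shift_int hmeas hL2 ht0).const_mul _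
      · refine (ae_restrict_iff' measurableSet_Ioi).2 (ae_of_all _ fun x hx => ?_)
        have h1 : Tendsto (fun s => H s x - K x) (nhdsWithin t S) (nhds 0) := by
          simpa using (hK x hx).sub_const (K x)
        have h2 : Tendsto (fun s => (H s x - K x) ^ 2) (nhdsWithin t S) (nhds 0) := by
          simpa using h1.pow 2
        have h3 := (h2.const_mul (h (t + x) ^ 2)).mul_const (Real.exp (γ * x))
        simpa [mul_assoc] using h3
    simpa using key
  -- A part
  have hucont : Tendsto (fun s => ‖u s - u t‖) (nhdsWithin t S) (nhds 0) := by
    have h1 : Tendsto u (nhdsWithin t S) (nhds (u t)) :=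
      ((uu_cont γ (hφ.toLp _)).tendsto t).mono_left nhdsWithin_le_nhds
    exact tendsto_iff_norm_sub_tendsto_zero.1 h1
  have key : ∀ s, 0 ≤ s → ∀ x ∈ Set.Ioi (0:ℝ),
      (Real.exp (-(γ * s) / 2) * phi γ h (x + s) - Real.exp (-(γ * t) / 2) * phi γ h (x + t)) ^ 2
        = (h (s + x) - h (t + x)) ^ 2 * Real.exp (γ * x) := by
    intro s hs0 x hx
    have hx0 : (0:ℝ) < x := hx
    have hxs : x + s ∈ Set.Ioi (0:ℝ) := by simp only [Set.mem_Ioi]; linarith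
    have hxt : x + t ∈ Set.Ioi (0:ℝ) := by simp only [Set.mem_Ioi]; linarith
    have e : ∀ r : ℝ, Real.exp (-(γ * r) / 2) * (h (x + r) * Real.exp (γ * (x + r) / 2))
        = h (x + r) * Real.exp (γ * x / 2) := by
      intro r
      rw [show -(γ * r) / 2 = γ * x / 2 - γ * (x + r) / 2 by ring, Real.exp_sub]
      field_simp
    simp only [phi, Set.indicator_of_mem hxs, Set.indicator_of_mem hxt]
    rw [e s, e t, add_comm s x, add_comm t x, ← sub_mul, mul_pow, pow_two (Real.exp (γ * x / 2)),
      ← Real.exp_add, show γ * x / 2 + γ * x / 2 = γ * x by ring]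
  have hA : ∀ s, 0 ≤ s →
      (∫ x in Set.Ioi (0:ℝ), (h (s + x) - h (t + x)) ^ 2 * Real.exp (γ * x))
        ≤ ‖u s - u t‖ ^ 2 := by
    intro s hs0
    have hcoe : ∀ᵐ x ∂(volume : Measure ℝ), (u s - u t) x =
        Real.exp (-(γ * s) / 2) * phi γ h (x + s) - Real.exp (-(γ * t) / 2) * phi γ h (x + t) := by
      filter_upwards [Lp.coeFn_sub (u s) (u t), uu_coe γ (phi γ h) hφ s,
        uu_coe γ (phi γ h) hφ t] with x h1 h2 h3
      rw [h1]
      simp [hu_def, h2, h3]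
    have hint2 : Integrable (fun x => ((u s - u t) x) ^ 2) :=
      (Lp.memLp (u s - u t)).integrable_sq
    calc (∫ x in Set.Ioi (0:ℝ), (h (s + x) - h (t + x)) ^ 2 * Real.exp (γ * x))
        = ∫ x in Set.Ioi (0:ℝ), ((u s - u t) x) ^ 2 := by
          refine setIntegral_congr_ae measurableSet_Ioi ?_
          filter_upwards [hcoe] with x hcx hmem
          rw [hcx]
          exact (key s hs0 x hmem).symm
      _ ≤ ∫ x, ((u s - u t) x) ^ 2 :=
          setIntegral_le_integral hint2 (ae_of_all _ fun x => sq_nonneg _)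
      _ = ‖u s - u t‖ ^ 2 := norm_sq_eq _
  have hdiffint : ∀ s, 0 ≤ s → IntegrableOn
      (fun x => (h (s + x) - h (t + x)) ^ 2 * Real.exp (γ * x)) (Set.Ioi 0) := by
    intro s hs0
    have gint : IntegrableOn (fun x => 2 * (h (s + x) ^ 2 * Real.exp (γ * x))
        + 2 * (h (t + x) ^ 2 * Real.exp (γ * x))) (Set.Ioi 0) :=
      ((shift_int hmeas hL2 hs0).const_mul 2).add ((shift_int hmeas hL2 ht0).const_mul 2)
    refine Integrable.mono' gint
      ((((hmeas_sh s).sub (hmeas_sh t)).pow_const 2).mul hexp).aestronglyMeasurable ?_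
    refine ae_of_all _ fun x => ?_
    rw [Real.norm_eq_abs, abs_of_nonneg (by positivity)]
    nlinarith [sq_nonneg (h (s + x) + h (t + x)), Real.exp_nonneg (γ * x),
      mul_le_mul_of_nonneg_right
        (show (h (s + x) - h (t + x)) ^ 2 ≤ 2 * h (s + x) ^ 2 + 2 * h (t + x) ^ 2 by
          nlinarith [sq_nonneg (h (s + x) + h (t + x))]) (Real.exp_nonneg (γ * x))]
  have hmain : ∀ s ∈ S, (∫ x in Set.Ioi (0:ℝ),
      (h (s + x) * H s x - h (t + x) * K x) ^ 2 * Real.exp (γ * x))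
        ≤ 2 * M ^ 2 * ‖u s - u t‖ ^ 2 + 2 * B s := by
    intro s hs
    have hs0 : 0 ≤ s := (hS hs).1
    have step1 : (∫ x in Set.Ioi (0:ℝ),
        (h (s + x) * H s x - h (t + x) * K x) ^ 2 * Real.exp (γ * x))
        ≤ ∫ x in Set.Ioi (0:ℝ),
            (2 * M ^ 2 * ((h (s + x) - h (t + x)) ^ 2 * Real.exp (γ * x))
              + 2 * (h (t + x) ^ 2 * (H s x - K x) ^ 2 * Real.exp (γ * x))) := by
      refine integral_mono_of_nonneg (ae_of_all _ fun x => by positivity)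
        (((hdiffint s hs0).const_mul _).add ((hBint s hs).const_mul 2)) ?_
      refine (ae_restrict_iff' measurableSet_Ioi).2 (ae_of_all _ fun x hx => ?_)
      have hHb := abs_le.1 (hM s (hS hs) x (Set.mem_Ici.2 (le_of_lt hx)))
      have hc2 : (H s x) ^ 2 ≤ M ^ 2 := sq_le_sq' hHb.1 hHb.2
      have keyq : (h (s + x) * H s x - h (t + x) * K x) ^ 2
          ≤ 2 * M ^ 2 * (h (s + x) - h (t + x)) ^ 2
            + 2 * (h (t + x) ^ 2 * (H s x - K x) ^ 2) := by
        have h1 : 0 ≤ (h (s + x) - h (t + x)) ^ 2 * (M ^ 2 - (H s x) ^ 2) :=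
          mul_nonneg (sq_nonneg _) (by linarith)
        nlinarith [sq_nonneg ((h (s + x) - h (t + x)) * H s x - h (t + x) * (H s x - K x))]
      calc (h (s + x) * H s x - h (t + x) * K x) ^ 2 * Real.exp (γ * x)
          ≤ (2 * M ^ 2 * (h (s + x) - h (t + x)) ^ 2
              + 2 * (h (t + x) ^ 2 * (H s x - K x) ^ 2)) * Real.exp (γ * x) :=
            mul_le_mul_of_nonneg_right keyq (Real.exp_nonneg _)
        _ = 2 * M ^ 2 * ((h (s + x) - h (t + x)) ^ 2 * Real.exp (γ * x))
              + 2 * (h (t + x) ^ 2 * (H s x - K x) ^ 2 * Real.exp (γ * x)) := by ring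
    have step2 : (∫ x in Set.Ioi (0:ℝ),
        (2 * M ^ 2 * ((h (s + x) - h (t + x)) ^ 2 * Real.exp (γ * x))
          + 2 * (h (t + x) ^ 2 * (H s x - K x) ^ 2 * Real.exp (γ * x))))
        = 2 * M ^ 2 * (∫ x in Set.Ioi (0:ℝ), (h (s + x) - h (t + x)) ^ 2 * Real.exp (γ * x))
          + 2 * B s := by
      rw [integral_add ((hdiffint s hs0).const_mul _) ((hBint s hs).const_mul 2),
        integral_const_mul, integral_const_mul]
    have step3 := mul_le_mul_of_nonneg_left (hA s hs0)
      (show (0:ℝ) ≤ 2 * M ^ 2 by positivity)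
    rw [step2] at step1
    linarith
  refine squeeze_zero' (g := fun s => Real.sqrt (2 * M ^ 2 * ‖u s - u t‖ ^ 2 + 2 * B s))
    (Eventually.of_forall fun s => Real.sqrt_nonneg _) ?_ ?_
  · filter_upwards [self_mem_nhdsWithin] with s hs
    exact Real.sqrt_le_sqrt (hmain s hs)
  · have hD : Tendsto (fun s => 2 * M ^ 2 * ‖u s - u t‖ ^ 2 + 2 * B s)
        (nhdsWithin t S) (nhds 0) := by
      have h1 : Tendsto (fun s => ‖u s - u t‖ ^ 2) (nhdsWithin t S) (nhds 0) := by
        simpa using hucont.pow 2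
      simpa using (h1.const_mul (2 * M ^ 2)).add (hBtend.const_mul 2)
    have := (Real.continuous_sqrt.tendsto 0).comp hD
    simpa [Function.comp_def] using this

/-- If `h ∈ L^{2,γ}` and `H(t,x)` is jointly measurable, bounded on
`[0,T*] × [0,∞)` and càdlàg in `t` for each `x ≥ 0`, then
`h̃(t) = (x ↦ h(t+x) H(t,x))` takes values in `L^{2,γ}` and is càdlàg in the
`L^{2,γ}`-norm: right-continuous at every `t ∈ [0,T*)` and with a left limit at
every `t ∈ (0,T*]`. -/
theorem cadlag_in_L2gamma (γ T : ℝ) (hγ : 0 < γ) (hT : 0 < T)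
    (h : ℝ → ℝ) (hmeas : Measurable h)
    (hL2 : IntegrableOn (fun x => h x ^ 2 * Real.exp (γ * x)) (Set.Ioi 0))
    (H : ℝ → ℝ → ℝ) (hHmeas : Measurable (Function.uncurry H))
    (hHbdd : ∃ M : ℝ, ∀ t ∈ Set.Icc 0 T, ∀ x ∈ Set.Ici (0 : ℝ), |H t x| ≤ M)
    (hright : ∀ x ∈ Set.Ici (0 : ℝ), ∀ t ∈ Set.Ico 0 T,
      Filter.Tendsto (fun s => H s x) (nhdsWithin t (Set.Ici t)) (nhds (H t x)))
    (hleft : ∀ x ∈ Set.Ici (0 : ℝ), ∀ t ∈ Set.Ioc 0 T,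
      ∃ L : ℝ, Filter.Tendsto (fun s => H s x) (nhdsWithin t (Set.Iio t)) (nhds L)) :
    (∀ t ∈ Set.Icc 0 T,
        IntegrableOn (fun x => (h (t + x) * H t x) ^ 2 * Real.exp (γ * x)) (Set.Ioi 0)) ∧
    (∀ t ∈ Set.Ico 0 T,
        Filter.Tendsto (fun s => Real.sqrt (∫ x in Set.Ioi (0 : ℝ),
            (h (s + x) * H s x - h (t + x) * H t x) ^ 2 * Real.exp (γ * x)))
          (nhdsWithin t (Set.Ioc t T)) (nhds 0)) ∧
    (∀ t ∈ Set.Ioc 0 T, ∃ g : ℝ → ℝ,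
        IntegrableOn (fun x => g x ^ 2 * Real.exp (γ * x)) (Set.Ioi 0) ∧
        Filter.Tendsto (fun s => Real.sqrt (∫ x in Set.Ioi (0 : ℝ),
            (h (s + x) * H s x - g x) ^ 2 * Real.exp (γ * x)))
          (nhdsWithin t (Set.Ico 0 t)) (nhds 0)) := by
  obtain ⟨M, hM⟩ := hHbdd
  have hmeas_sh : ∀ s : ℝ, Measurable fun x => h (s + x) := fun s =>
    hmeas.comp (measurable_const.add measurable_id)
  have hmeas_H : ∀ s : ℝ, Measurable fun x => H s x := fun s =>
    hHmeas.comp (measurable_const.prodMk measurable_id)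
  have hexp : Measurable fun x : ℝ => Real.exp (γ * x) := by fun_prop
  refine ⟨?_, ?_, ?_⟩
  · -- part 1
    intro t ht
    refine Integrable.mono' ((shift_int hmeas hL2 ht.1).const_mul (M ^ 2))
      ((((hmeas_sh t).mul (hmeas_H t)).pow_const 2).mul hexp).aestronglyMeasurable ?_
    refine (ae_restrict_iff' measurableSet_Ioi).2 (ae_of_all _ fun x hx => ?_)
    have hHb := abs_le.1 (hM t ht x (Set.mem_Ici.2 (le_of_lt hx)))
    have hc2 : (H t x) ^ 2 ≤ M ^ 2 := sq_le_sq' hHb.1 hHb.2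
    rw [Real.norm_eq_abs, abs_of_nonneg (by positivity)]
    calc (h (t + x) * H t x) ^ 2 * Real.exp (γ * x)
        = h (t + x) ^ 2 * (H t x) ^ 2 * Real.exp (γ * x) := by ring
      _ ≤ h (t + x) ^ 2 * M ^ 2 * Real.exp (γ * x) := by
          exact mul_le_mul_of_nonneg_right
            (mul_le_mul_of_nonneg_left hc2 (sq_nonneg _)) (Real.exp_nonneg _)
      _ = M ^ 2 * (h (t + x) ^ 2 * Real.exp (γ * x)) := by ring
  · -- part 2 : right continuity
    intro t ht
    exact core_tendsto γ T hγ h hmeas hL2 H hHmeas M hM t ht.1 ht.2.le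
      (Set.Ioc t T) (fun s hs => ⟨le_trans ht.1 hs.1.le, hs.2⟩)
      (fun x => H t x) (hmeas_H t).aestronglyMeasurable
      (fun x hx => hM t ⟨ht.1, ht.2.le⟩ x (Set.mem_Ici.2 (le_of_lt hx)))
      (fun x hx => (hright x (Set.mem_Ici.2 (le_of_lt hx)) t ht).mono_left
        (nhdsWithin_mono _ (Set.Ioc_subset_Ioi_self.trans Set.Ioi_subset_Ici_self)))
  · -- part 3 : left limits
    intro t ht
    have ht0 : 0 < t := ht.1
    set K : ℝ → ℝ := fun x => if hx : 0 ≤ x then (hleft x hx t ht).choose else 0 with hK_def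
    have hKt : ∀ x, 0 ≤ x → Tendsto (fun s => H s x) (nhdsWithin t (Set.Iio t)) (nhds (K x)) := by
      intro x hx
      simp only [hK_def, dif_pos hx]
      exact (hleft x hx t ht).choose_spec
    set sn : ℕ → ℝ := fun n => t - t / (n + 1) with hsn_def
    have hsn_mem : ∀ n, sn n ∈ Set.Ico 0 t := by
      intro n
      have h1 : (1:ℝ) ≤ (n:ℝ) + 1 := le_add_of_nonneg_left (Nat.cast_nonneg n)
      have h2 : t / ((n:ℝ) + 1) ≤ t := div_le_self ht0.le h1
      have h3 : 0 < t / ((n:ℝ) + 1) := div_pos ht0 (by positivity)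
      exact ⟨by simp only [hsn_def]; linarith, by simp only [hsn_def]; linarith⟩
    have hsn_tend : Tendsto sn atTop (nhdsWithin t (Set.Iio t)) := by
      apply tendsto_nhdsWithin_of_tendsto_nhds_of_eventually_within
      · have h1 : Tendsto (fun n : ℕ => t / ((n:ℝ) + 1)) atTop (nhds 0) := by
          simpa [div_eq_mul_inv, mul_comm] using
            tendsto_one_div_add_atTop_nhds_zero_nat.const_mul t
        simpa using tendsto_const_nhds.sub h1
      · exact Eventually.of_forall fun n => (hsn_mem n).2
    have hKm : AEStronglyMeasurable K (volume.restrict (Set.Ioi 0)) := by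
      refine aestronglyMeasurable_of_tendsto_ae atTop
        (fun n => (hmeas_H (sn n)).aestronglyMeasurable) ?_
      refine (ae_restrict_iff' measurableSet_Ioi).2 (ae_of_all _ fun x hx => ?_)
      exact (hKt x (le_of_lt hx)).comp hsn_tend
    have hKb : ∀ x ∈ Set.Ioi (0:ℝ), |K x| ≤ M := by
      intro x hx
      have h1 : Tendsto (fun n => |H (sn n) x|) atTop (nhds |K x|) :=
        ((hKt x (le_of_lt hx)).comp hsn_tend).abs
      refine le_of_tendsto h1 (Eventually.of_forall fun n => ?_)
      exact hM (sn n) ⟨(hsn_mem n).1, le_trans (hsn_mem n).2.le ht.2⟩ x (Set.mem_Ici.2 (le_of_lt hx))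
    refine ⟨fun x => h (t + x) * K x, ?_, ?_⟩
    · have hasm : AEStronglyMeasurable (fun x => h (t + x) * K x)
          (volume.restrict (Set.Ioi 0)) := (hmeas_sh t).aestronglyMeasurable.mul hKm
      have hasm2 : AEStronglyMeasurable (fun x => (h (t + x) * K x) ^ 2 * Real.exp (γ * x))
          (volume.restrict (Set.Ioi 0)) := by
        have := (hasm.mul hasm).mul hexp.aestronglyMeasurable
        simpa [pow_two, Pi.mul_def] using this
      refine Integrable.mono' ((shift_int hmeas hL2 ht0.le).const_mul (M ^ 2)) hasm2 ?_
      refine (ae_restrict_iff' measurableSet_Ioi).2 (ae_of_all _ fun x hx => ?_)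
      have hKb' := abs_le.1 (hKb x hx)
      have hc2 : (K x) ^ 2 ≤ M ^ 2 := sq_le_sq' hKb'.1 hKb'.2
      rw [Real.norm_eq_abs, abs_of_nonneg (by positivity)]
      calc (h (t + x) * K x) ^ 2 * Real.exp (γ * x)
          = h (t + x) ^ 2 * (K x) ^ 2 * Real.exp (γ * x) := by ring
        _ ≤ h (t + x) ^ 2 * M ^ 2 * Real.exp (γ * x) := by
            exact mul_le_mul_of_nonneg_right
              (mul_le_mul_of_nonneg_left hc2 (sq_nonneg _)) (Real.exp_nonneg _)
        _ = M ^ 2 * (h (t + x) ^ 2 * Real.exp (γ * x)) := by ring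
    · exact core_tendsto γ T hγ h hmeas hL2 H hHmeas M hM t ht0.le ht.2
        (Set.Ico 0 t) (fun s hs => ⟨hs.1, le_trans hs.2.le ht.2⟩)
        K hKm hKb
        (fun x hx => (hKt x (le_of_lt hx)).mono_left
          (nhdsWithin_mono _ Set.Ico_subset_Iio_self))
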